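/- If a convex function u : ℝⁿ → ℝ has a constant set {u = min u} containing a full line, then u is invariant under translations along that line, and consequently its Monge–Ampère measure is identically zero. -/

import Mathlib

open MeasureTheory

/-- The subgradient of a convex function `u` (relative to the domain `Ω`) at `x`. -/
def subgrad {n : ℕ} (u : EuclideanSpace ℝ (Fin n) → ℝ) (Ω : Set (EuclideanSpace ℝ (Fin n)))
    (x : EuclideanSpace ℝ (Fin n)) : Set (EuclideanSpace ℝ (Fin n)) :=
  {p | ∀ y ∈ Ω, u x + (inner ℝ p (y - x) : ℝ) ≤ u y}

/-- The subgradient image `∂u(s)` of a set `s`. -/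
def subgradImage {n : ℕ} (u : EuclideanSpace ℝ (Fin n) → ℝ) (Ω : Set (EuclideanSpace ℝ (Fin n)))
    (s : Set (EuclideanSpace ℝ (Fin n))) : Set (EuclideanSpace ℝ (Fin n)) :=
  ⋃ x ∈ s, subgrad u Ω x
theorem stmt_6 (n : ℕ) (u : EuclideanSpace ℝ (Fin n) → ℝ)
    (hconv : ConvexOn ℝ Set.univ u)
    (p d : EuclideanSpace ℝ (Fin n)) (hd : d ≠ 0)
    (hmin : ∀ x, u p ≤ u x)
    (hline : ∀ t : ℝ, u (p + t • d) = u p) :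
    (∀ (x : EuclideanSpace ℝ (Fin n)) (t : ℝ), u (x + t • d) = u x) ∧
      ∀ E : Set (EuclideanSpace ℝ (Fin n)), volume (subgradImage u Set.univ E) = 0 := by
  have hu : Continuous u := by
    exact continuousOn_univ.mp (hconv.continuousOn isOpen_univ)
  -- Step 1: u (x + t • d) ≤ u x for all x, t
  have hle : ∀ (x : EuclideanSpace ℝ (Fin n)) (t : ℝ), u (x + t • d) ≤ u x := by
    intro x t
    have key : ∀ l ∈ Set.Ioo (0:ℝ) 1,
        u (x + t • d) ≤ (1 - l) * u ((1 - l)⁻¹ • (x - l • p)) + l * u p := by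
      intro l hl
      have hl0 : (0:ℝ) < l := hl.1
      have hl1 : l < 1 := hl.2
      have h1l : (0:ℝ) < 1 - l := by linarith
      have := hconv.2 (Set.mem_univ ((1 - l)⁻¹ • (x - l • p)))
        (Set.mem_univ (p + (t / l) • d)) h1l.le hl0.le (by ring)
      have hcomb : (1 - l) • ((1 - l)⁻¹ • (x - l • p)) + l • (p + (t / l) • d)
          = x + t • d := by
        rw [smul_smul, mul_inv_cancel₀ h1l.ne', one_smul]
        rw [smul_add, smul_smul, mul_div_cancel₀ _ hl0.ne']
        abel
      rw [hcomb] at this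
      calc u (x + t • d) ≤ (1 - l) • u ((1 - l)⁻¹ • (x - l • p)) + l • u (p + (t / l) • d) :=
            this
        _ = (1 - l) * u ((1 - l)⁻¹ • (x - l • p)) + l * u p := by
            rw [hline (t / l)]; simp only [smul_eq_mul]
    have hcont : ContinuousAt (fun l : ℝ =>
        (1 - l) * u ((1 - l)⁻¹ • (x - l • p)) + l * u p) 0 := by
      apply ContinuousAt.add _ (continuousAt_id.mul continuousAt_const)
      apply ContinuousAt.mul (continuousAt_const.sub continuousAt_id)
      apply hu.continuousAt.comp
      refine ContinuousAt.smul (f := fun l : ℝ => (1 - l)⁻¹) (g := fun l : ℝ => x - l • p) ?_ ?_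
      · exact ((continuousAt_const.sub continuousAt_id).inv₀ (by norm_num))
      · exact continuousAt_const.sub (continuousAt_id.smul continuousAt_const)
    have hval : (fun l : ℝ => (1 - l) * u ((1 - l)⁻¹ • (x - l • p)) + l * u p) 0 = u x := by
      simp
    have htend : Filter.Tendsto (fun l : ℝ =>
        (1 - l) * u ((1 - l)⁻¹ • (x - l • p)) + l * u p) (nhdsWithin 0 (Set.Ioi 0))
        (nhds (u x)) := by
      rw [← hval]
      exact hcont.continuousWithinAt.tendsto
    refine ge_of_tendsto htend ?_
    filter_upwards [Ioo_mem_nhdsGT_of_mem (by constructor <;> norm_num :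
      (0:ℝ) ∈ Set.Ico 0 1)] with l hl using key l hl
  have hinv : ∀ (x : EuclideanSpace ℝ (Fin n)) (t : ℝ), u (x + t • d) = u x := by
    intro x t
    refine le_antisymm (hle x t) ?_
    have := hle (x + t • d) (-t)
    simpa using this
  refine ⟨hinv, ?_⟩
  -- Step 2: subgradients are perpendicular to d
  intro E
  set K : Submodule ℝ (EuclideanSpace ℝ (Fin n)) :=
    LinearMap.ker ((innerSL ℝ d).toLinearMap) with hK
  have hsub : subgradImage u Set.univ E ⊆ (K : Set (EuclideanSpace ℝ (Fin n))) := by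
    intro q hq
    simp only [subgradImage, Set.mem_iUnion] at hq
    obtain ⟨x, _, hxq⟩ := hq
    have hc : ∀ t : ℝ, t * (inner ℝ q d : ℝ) ≤ 0 := by
      intro t
      have := hxq (x + t • d) (Set.mem_univ _)
      rw [hinv x t] at this
      have h2 : (inner ℝ q ((x + t • d) - x) : ℝ) = t * (inner ℝ q d : ℝ) := by
        rw [add_sub_cancel_left, real_inner_smul_right]
      rw [h2] at this
      linarith
    have h1 := hc 1
    have h2 := hc (-1)
    have hqd : (inner ℝ q d : ℝ) = 0 := by linarith
    simp only [hK, SetLike.mem_coe, LinearMap.mem_ker, ContinuousLinearMap.coe_coe,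
      innerSL_apply_apply]
    rw [real_inner_comm]
    exact hqd
  have hKtop : K ≠ ⊤ := by
    intro h
    have : d ∈ K := h ▸ Submodule.mem_top
    simp only [hK, LinearMap.mem_ker, ContinuousLinearMap.coe_coe, innerSL_apply_apply] at this
    exact hd (inner_self_eq_zero.mp this)
  have hK0 : volume (K : Set (EuclideanSpace ℝ (Fin n))) = 0 :=
    Measure.addHaar_submodule volume K hKtop
  exact le_antisymm (hK0 ▸ measure_mono hsub) zero_le
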